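/- Let H be a weak Hopf algebra. The canonical map can: H ⊗_{H^L} H → C = Im(g) ⊆ H⊗H, can(h ⊗ k) = h k₍₁₎ ⊗ k₍₂₎, is bijective with inverse given by can⁻¹(1₍₁₎ ⊗ h 1₍₂₎) = 1₍₁₎ S(h₍₁₎ 1₍₂₎) ⊗_{H^L} h₍₂₎ 1₍₃₎. Hence H is a weak H-Galois extension of H^L. -/

import Mathlib

open TensorProduct LinearMap

/-- A weak bialgebra over a commutative ring `k`: a `k`-algebra with a
coalgebra structure whose comultiplication is multiplicative, the
compatibility of the counit with multiplication and of the unit with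
comultiplication being weakened to the weak bialgebra axioms. -/
structure WeakBialgebra (k H : Type) [CommRing k] [Ring H] [Algebra k H] where
  comul : H →ₗ[k] H ⊗[k] H
  counit : H →ₗ[k] k
  coassoc : ∀ h, (TensorProduct.assoc k H H H) ((rTensor H comul) (comul h)) =
    (lTensor H comul) (comul h)
  counit_comul : ∀ h, (TensorProduct.lid k H) ((rTensor H counit) (comul h)) = h
  comul_counit : ∀ h, (TensorProduct.rid k H) ((lTensor H counit) (comul h)) = h
  comul_mul : ∀ g h : H, comul (g * h) = comul g * comul h
  /-- `Δ²(1) = (Δ(1)⊗1)(1⊗Δ(1))` -/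
  weak_unit_l : rTensor H comul (comul 1) =
    (comul 1 ⊗ₜ[k] (1 : H)) *
      ((TensorProduct.assoc k H H H).symm ((1 : H) ⊗ₜ[k] comul 1))
  /-- `Δ²(1) = (1⊗Δ(1))(Δ(1)⊗1)` -/
  weak_unit_r : rTensor H comul (comul 1) =
    ((TensorProduct.assoc k H H H).symm ((1 : H) ⊗ₜ[k] comul 1)) *
      (comul 1 ⊗ₜ[k] (1 : H))
  /-- `ε(ghl) = ε(g h₍₁₎) ε(h₍₂₎ l)` -/
  weak_counit_l : ∀ g h l : H, counit (g * h * l) =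
    (LinearMap.mul' k k) ((TensorProduct.map (counit ∘ₗ mulLeft k g)
      (counit ∘ₗ mulRight k l)) (comul h))
  /-- `ε(ghl) = ε(g h₍₂₎) ε(h₍₁₎ l)` -/
  weak_counit_r : ∀ g h l : H, counit (g * h * l) =
    (LinearMap.mul' k k) ((TensorProduct.map (counit ∘ₗ mulRight k l)
      (counit ∘ₗ mulLeft k g)) (comul h))

/-- A right `H`-comodule algebra over a weak bialgebra `H`. -/
structure ComoduleAlgebra (k H A : Type) [CommRing k] [Ring H] [Algebra k H]
    [Ring A] [Algebra k A] (W : WeakBialgebra k H) where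
  rho : A →ₗ[k] A ⊗[k] H
  coassoc : ∀ a, (TensorProduct.assoc k A H H) ((rTensor H rho) (rho a)) =
    (lTensor A W.comul) (rho a)
  counit : ∀ a, (TensorProduct.rid k A) ((lTensor A W.counit) (rho a)) = a
  rho_mul : ∀ a b : A, rho (a * b) = rho a * rho b
  /-- `ρ²(1) = 1₍[0]₎ ⊗ 1₍[1]₎1₍₁₎ ⊗ 1₍₂₎` -/
  weak : rTensor H rho (rho 1) =
    ((rho 1) ⊗ₜ[k] (1 : H)) *
      ((TensorProduct.assoc k A H H).symm ((1 : A) ⊗ₜ[k] W.comul 1))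
variable (k H : Type) [CommRing k] [Ring H] [Algebra k H]

/-- `Π^L(h) = ε(1₍₁₎ h) 1₍₂₎`. -/
noncomputable def PiL (W : WeakBialgebra k H) : H → H := fun h =>
  (TensorProduct.lid k H)
    ((TensorProduct.map (W.counit ∘ₗ mulRight k h) LinearMap.id) (W.comul 1))

/-- `Π^R(h) = 1₍₁₎ ε(h 1₍₂₎)`. -/
noncomputable def PiR (W : WeakBialgebra k H) : H → H := fun h =>
  (TensorProduct.rid k H)
    ((TensorProduct.map LinearMap.id (W.counit ∘ₗ mulLeft k h)) (W.comul 1))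

/-- A weak Hopf algebra: a weak bialgebra with an antipode `S` satisfying
`h₍₁₎S(h₍₂₎) = Π^L(h)`, `S(h₍₁₎)h₍₂₎ = Π^R(h)` and
`S(h₍₁₎)h₍₂₎S(h₍₃₎) = S(h)`. -/
structure WeakHopfAlgebra (k H : Type) [CommRing k] [Ring H] [Algebra k H]
    extends WeakBialgebra k H where
  S : H →ₗ[k] H
  S_left : ∀ h : H, LinearMap.mul' k H
    ((TensorProduct.map LinearMap.id S) (comul h)) = PiL k H toWeakBialgebra h
  S_right : ∀ h : H, LinearMap.mul' k H
    ((TensorProduct.map S LinearMap.id) (comul h)) = PiR k H toWeakBialgebra h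
  S_mid : ∀ h : H, LinearMap.mul' k H
    ((TensorProduct.map (LinearMap.mul' k H ∘ₗ TensorProduct.map S LinearMap.id)
      S) ((rTensor H comul) (comul h))) = S h


variable (Wh : WeakHopfAlgebra k H)

/-- `H^L = Im(Π^L)`. -/
noncomputable def HLset : Set H := Set.range (PiL k H Wh.toWeakBialgebra)

/-- The canonical map at the level of `H ⊗ₖ H`:
`can(h ⊗ h') = h h'₍₁₎ ⊗ h'₍₂₎ = (h ⊗ 1) Δ(h')`. -/
noncomputable def canMap : H ⊗[k] H →ₗ[k] H ⊗[k] H :=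
  TensorProduct.lift (LinearMap.mk₂ k
    (fun h h' : H => (h ⊗ₜ[k] (1 : H)) * Wh.comul h')
    (by intro a b c; simp [TensorProduct.add_tmul, add_mul])
    (by intro t a c; show (t • a) ⊗ₜ[k] (1:H) * Wh.comul c = _; rw [← TensorProduct.smul_tmul', smul_mul_assoc])
    (by intro a b c; simp [map_add, mul_add])
    (by intro t a c; simp [map_smul, mul_smul_comm]))

/-- The `H^L`-balancing relations in `H ⊗ₖ H`, whose quotient is
`H ⊗_{H^L} H`. -/
noncomputable def balHL : Submodule k (H ⊗[k] H) :=
  Submodule.span k {z | ∃ (h h' w : H), w ∈ HLset k H Wh ∧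
    z = (h * w) ⊗ₜ[k] h' - h ⊗ₜ[k] (w * h')}


set_option synthInstance.maxHeartbeats 1000000
set_option maxHeartbeats 1000000

section AuxLemmas

variable {k H : Type} [CommRing k] [Ring H] [Algebra k H] (Wh : WeakHopfAlgebra k H)

lemma canMap_tmul (a b : H) :
    canMap k H Wh (a ⊗ₜ[k] b) = (a ⊗ₜ[k] (1 : H)) * Wh.comul b := rfl

lemma u_mul_comul (m : H) : Wh.comul 1 * Wh.comul m = Wh.comul m := by
  rw [← Wh.comul_mul, one_mul]

lemma comul_mul_u (m : H) : Wh.comul m * Wh.comul 1 = Wh.comul m := by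
  rw [← Wh.comul_mul, mul_one]

lemma assoc_mul' (x y : (H ⊗[k] H) ⊗[k] H) :
    TensorProduct.assoc k H H H (x * y) =
      TensorProduct.assoc k H H H x * TensorProduct.assoc k H H H y := by
  have h : ∀ z : (H ⊗[k] H) ⊗[k] H,
      TensorProduct.assoc k H H H z = Algebra.TensorProduct.assoc k k k H H H z := fun _ => rfl
  rw [h, h, h, map_mul]

lemma assoc_symm_mul' (x y : H ⊗[k] (H ⊗[k] H)) :
    (TensorProduct.assoc k H H H).symm (x * y) =
      (TensorProduct.assoc k H H H).symm x * (TensorProduct.assoc k H H H).symm y := by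
  have h : ∀ z : H ⊗[k] (H ⊗[k] H),
      (TensorProduct.assoc k H H H).symm z =
        (Algebra.TensorProduct.assoc k k k H H H).symm z := fun _ => rfl
  rw [h, h, h, map_mul]

lemma lTensor_comul_mul (x y : H ⊗[k] H) :
    lTensor H Wh.comul (x * y) = lTensor H Wh.comul x * lTensor H Wh.comul y := by
  induction x using TensorProduct.induction_on with
  | zero => simp
  | tmul a b =>
    induction y using TensorProduct.induction_on with
    | zero => simp
    | tmul c d => simp [Algebra.TensorProduct.tmul_mul_tmul, Wh.comul_mul]
    | add y1 y2 h1 h2 => simp [mul_add, h1, h2]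
  | add x1 x2 h1 h2 => simp [add_mul, h1, h2]

end AuxLemmas

section AuxLemmas2

variable {k H : Type} [CommRing k] [Ring H] [Algebra k H] (Wh : WeakHopfAlgebra k H)

/-- `β(g ⊗ m) = (g ⊗ 1) (S(m₁) ⊗ m₂)`; the candidate inverse of `can`. -/
noncomputable def betaMap : H ⊗[k] H →ₗ[k] H ⊗[k] H :=
  LinearMap.mul' k (H ⊗[k] H) ∘ₗ
    TensorProduct.map ((TensorProduct.mk k H H).flip 1) (rTensor H Wh.S ∘ₗ Wh.comul)

lemma betaMap_tmul (g m : H) :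
    betaMap Wh (g ⊗ₜ[k] m) = (g ⊗ₜ[k] (1 : H)) * rTensor H Wh.S (Wh.comul m) := by
  simp [betaMap]

lemma canMap_leftmul (g : H) (t : H ⊗[k] H) :
    canMap k H Wh ((g ⊗ₜ[k] (1 : H)) * t) = (g ⊗ₜ[k] (1 : H)) * canMap k H Wh t := by
  induction t using TensorProduct.induction_on with
  | zero => simp
  | tmul c d =>
    rw [Algebra.TensorProduct.tmul_mul_tmul, one_mul, canMap_tmul, canMap_tmul,
      ← mul_assoc, Algebra.TensorProduct.tmul_mul_tmul, mul_one]
  | add x y hx hy => simp [mul_add, hx, hy]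

lemma betaMap_leftmul (g : H) (t : H ⊗[k] H) :
    betaMap Wh ((g ⊗ₜ[k] (1 : H)) * t) = (g ⊗ₜ[k] (1 : H)) * betaMap Wh t := by
  induction t using TensorProduct.induction_on with
  | zero => simp
  | tmul c d =>
    rw [Algebra.TensorProduct.tmul_mul_tmul, one_mul, betaMap_tmul, betaMap_tmul,
      ← mul_assoc, Algebra.TensorProduct.tmul_mul_tmul, mul_one]
  | add x y hx hy => simp [mul_add, hx, hy]

/-- `Δ(Π^L(x)) = (Π^L(x) ⊗ 1) Δ(1)`. -/
lemma comul_PiL (x : H) :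
    Wh.comul (PiL k H Wh.toWeakBialgebra x) =
      (PiL k H Wh.toWeakBialgebra x ⊗ₜ[k] (1 : H)) * Wh.comul 1 := by
  set f : H →ₗ[k] k := Wh.counit ∘ₗ mulRight k x with hf
  have step1 : ∀ t : H ⊗[k] H,
      Wh.comul ((TensorProduct.lid k H) ((TensorProduct.map f LinearMap.id) t)) =
        (TensorProduct.lid k (H ⊗[k] H))
          ((TensorProduct.map f LinearMap.id) (lTensor H Wh.comul t)) := by
    intro t
    induction t using TensorProduct.induction_on with
    | zero => simp
    | tmul a b => simp
    | add s t hs ht => simp [hs, ht]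
  have G1 : ∀ y z : H ⊗[k] H,
      (TensorProduct.lid k (H ⊗[k] H))
          ((TensorProduct.map f LinearMap.id)
            ((TensorProduct.assoc k H H H)
              ((y ⊗ₜ[k] (1 : H)) *
                ((TensorProduct.assoc k H H H).symm ((1 : H) ⊗ₜ[k] z))))) =
        (((TensorProduct.lid k H) ((TensorProduct.map f LinearMap.id) y)) ⊗ₜ[k] (1 : H)) * z := by
    intro y z
    induction y using TensorProduct.induction_on with
    | zero => simp
    | tmul a b =>
      induction z using TensorProduct.induction_on with
      | zero => simp
      | tmul c d =>
        simp [Algebra.TensorProduct.tmul_mul_tmul, TensorProduct.smul_tmul',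
          smul_mul_assoc]
      | add z1 z2 h1 h2 => simp only [TensorProduct.tmul_add, map_add, mul_add, h1, h2]
    | add y1 y2 h1 h2 => simp only [TensorProduct.add_tmul, add_mul, map_add, h1, h2]
  show Wh.comul ((TensorProduct.lid k H) ((TensorProduct.map f LinearMap.id) (Wh.comul 1))) = _
  rw [step1, ← Wh.coassoc 1, Wh.weak_unit_l, G1]
  rfl

end AuxLemmas2

section AuxLemmas3

variable {k H : Type} [CommRing k] [Ring H] [Algebra k H] (Wh : WeakHopfAlgebra k H)

/-- `Π^R` as a linear map, `Π^R(h) = S(h₁)h₂`. -/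
noncomputable def PiR' : H →ₗ[k] H :=
  LinearMap.mul' k H ∘ₗ TensorProduct.map Wh.S LinearMap.id ∘ₗ Wh.comul

/-- `Π^R` as a linear map, via `Π^R(h) = 1₍₁₎ ε(h 1₍₂₎)`. -/
noncomputable def PiRlin : H →ₗ[k] H :=
  (TensorProduct.rid k H).toLinearMap ∘ₗ lTensor H Wh.counit ∘ₗ
    mulRight k (Wh.comul 1) ∘ₗ (TensorProduct.mk k H H) 1

lemma PiR'_eq_PiRlin : PiR' Wh = PiRlin Wh := by
  ext h
  have h1 : PiR' Wh h = PiR k H Wh.toWeakBialgebra h := Wh.S_right h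
  have h2 : ∀ t : H ⊗[k] H,
      (TensorProduct.rid k H)
          ((TensorProduct.map LinearMap.id (Wh.counit ∘ₗ mulLeft k h)) t) =
        (TensorProduct.rid k H) (lTensor H Wh.counit (((1 : H) ⊗ₜ[k] h) * t)) := by
    intro t
    induction t using TensorProduct.induction_on with
    | zero => simp
    | tmul a b => simp [Algebra.TensorProduct.tmul_mul_tmul]
    | add s t hs ht => simp only [map_add, mul_add, hs, ht]
  rw [h1]
  show PiR k H Wh.toWeakBialgebra h = (TensorProduct.rid k H)
    (lTensor H Wh.counit (mulRight k (Wh.comul 1) ((TensorProduct.mk k H H) 1 h)))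
  rw [PiR]
  simp only [TensorProduct.mk_apply, mulRight_apply]
  exact h2 (Wh.comul 1)

/-- `(id ⊗ ε ⊗ id)` on `(H⊗H)⊗H`. -/
noncomputable def PsiMap : (H ⊗[k] H) ⊗[k] H →ₗ[k] H ⊗[k] H :=
  rTensor H ((TensorProduct.rid k H).toLinearMap ∘ₗ lTensor H Wh.counit)

lemma Psi_counit : ∀ t : H ⊗[k] H,
    PsiMap Wh ((TensorProduct.assoc k H H H).symm (lTensor H Wh.comul t)) = t := by
  have sub : ∀ (a : H) (s : H ⊗[k] H),
      PsiMap Wh ((TensorProduct.assoc k H H H).symm (a ⊗ₜ[k] s)) =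
        a ⊗ₜ[k] ((TensorProduct.lid k H) (rTensor H Wh.counit s)) := by
    intro a s
    induction s using TensorProduct.induction_on with
    | zero => simp
    | tmul c d =>
      rw [TensorProduct.assoc_symm_tmul]
      simp only [PsiMap, rTensor_tmul, coe_comp, LinearEquiv.coe_coe, Function.comp_apply,
        lTensor_tmul, TensorProduct.rid_tmul, TensorProduct.lid_tmul,
        TensorProduct.tmul_smul, TensorProduct.smul_tmul']
    | add s t hs ht => simp only [TensorProduct.tmul_add, map_add, hs, ht]
  intro t
  induction t using TensorProduct.induction_on with
  | zero => simp
  | tmul a b => rw [lTensor_tmul, sub, Wh.counit_comul]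
  | add s t hs ht => simp only [map_add, hs, ht]

lemma Psi_PiRlin : ∀ t : H ⊗[k] H,
    PsiMap Wh (((TensorProduct.assoc k H H H).symm ((1 : H) ⊗ₜ[k] t)) *
        (Wh.comul 1 ⊗ₜ[k] (1 : H))) = rTensor H (PiRlin Wh) t := by
  have sub : ∀ (a b : H) (v : H ⊗[k] H),
      PsiMap Wh ((((1 : H) ⊗ₜ[k] a) ⊗ₜ[k] b) * (v ⊗ₜ[k] (1 : H))) =
        ((TensorProduct.rid k H) (lTensor H Wh.counit (((1 : H) ⊗ₜ[k] a) * v))) ⊗ₜ[k] b := by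
    intro a b v
    induction v using TensorProduct.induction_on with
    | zero => simp
    | tmul c d =>
      simp [PsiMap, Algebra.TensorProduct.tmul_mul_tmul, TensorProduct.smul_tmul']
    | add s t hs ht => simp only [map_add, TensorProduct.add_tmul, mul_add, add_mul, hs, ht]
  intro t
  induction t using TensorProduct.induction_on with
  | zero => simp
  | tmul a b =>
    rw [TensorProduct.assoc_symm_tmul, sub, rTensor_tmul]
    rfl
  | add s t hs ht => simp only [map_add, TensorProduct.tmul_add, add_mul, hs, ht]

/-- Identity A: `Π^R(m₁) ⊗ m₂ = (1 ⊗ m) Δ(1)`. -/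
lemma piR_id (m : H) :
    rTensor H (PiR' Wh) (Wh.comul m) = ((1 : H) ⊗ₜ[k] m) * Wh.comul 1 := by
  have claimY : (TensorProduct.assoc k H H H).symm
        (lTensor H Wh.comul (((1 : H) ⊗ₜ[k] m) * Wh.comul 1)) =
      ((TensorProduct.assoc k H H H).symm ((1 : H) ⊗ₜ[k] Wh.comul m)) *
        (Wh.comul 1 ⊗ₜ[k] (1 : H)) := by
    rw [lTensor_comul_mul, lTensor_tmul, ← Wh.coassoc 1, Wh.weak_unit_r]
    rw [assoc_symm_mul', LinearEquiv.symm_apply_apply, ← mul_assoc, ← assoc_symm_mul',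
      Algebra.TensorProduct.tmul_mul_tmul, one_mul, comul_mul_u]
  rw [PiR'_eq_PiRlin, ← Psi_PiRlin, ← claimY, Psi_counit]

/-- `can(S(m₁) ⊗ m₂) = (1 ⊗ m) Δ(1)`. -/
lemma canMap_rS (m : H) :
    canMap k H Wh (rTensor H Wh.S (Wh.comul m)) = ((1 : H) ⊗ₜ[k] m) * Wh.comul 1 := by
  set Θ : (H ⊗[k] H) ⊗[k] H →ₗ[k] H ⊗[k] H :=
    rTensor H (LinearMap.mul' k H ∘ₗ TensorProduct.map Wh.S LinearMap.id) with hΘ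
  have c1a : ∀ t : H ⊗[k] H,
      canMap k H Wh (rTensor H Wh.S t) =
        Θ ((TensorProduct.assoc k H H H).symm (lTensor H Wh.comul t)) := by
    have sub : ∀ (a : H) (s : H ⊗[k] H),
        (Wh.S a ⊗ₜ[k] (1 : H)) * s =
          Θ ((TensorProduct.assoc k H H H).symm (a ⊗ₜ[k] s)) := by
      intro a s
      induction s using TensorProduct.induction_on with
      | zero => simp
      | tmul c d => simp [hΘ, Algebra.TensorProduct.tmul_mul_tmul]
      | add s t hs ht => simp only [TensorProduct.tmul_add, map_add, mul_add, hs, ht]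
    intro t
    induction t using TensorProduct.induction_on with
    | zero => simp
    | tmul a b => rw [rTensor_tmul, canMap_tmul, lTensor_tmul, sub]
    | add s t hs ht => simp only [map_add, hs, ht]
  have c1c : ∀ t : H ⊗[k] H,
      Θ (rTensor H Wh.comul t) = rTensor H (PiR' Wh) t := by
    intro t
    induction t using TensorProduct.induction_on with
    | zero => simp
    | tmul a b => rw [rTensor_tmul, rTensor_tmul, rTensor_tmul]; rfl
    | add s t hs ht => simp only [map_add, hs, ht]
  rw [c1a, ← Wh.coassoc m, LinearEquiv.symm_apply_apply, c1c, piR_id]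

/-- The key lemma: `can ∘ β = ( · * Δ(1))`. -/
lemma canMap_betaMap (y : H ⊗[k] H) :
    canMap k H Wh (betaMap Wh y) = y * Wh.comul 1 := by
  induction y using TensorProduct.induction_on with
  | zero => simp
  | tmul g m =>
    rw [betaMap_tmul, canMap_leftmul, canMap_rS, ← mul_assoc,
      Algebra.TensorProduct.tmul_mul_tmul, mul_one, one_mul]
  | add s t hs ht => simp only [map_add, add_mul, hs, ht]

end AuxLemmas3

section AuxLemmas4

variable {k H : Type} [CommRing k] [Ring H] [Algebra k H] (Wh : WeakHopfAlgebra k H)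

/-- `Π^L` as a linear map, `Π^L(h) = h₁ S(h₂)`. -/
noncomputable def PiL' : H →ₗ[k] H :=
  LinearMap.mul' k H ∘ₗ TensorProduct.map LinearMap.id Wh.S ∘ₗ Wh.comul

lemma PiL'_apply (a : H) : PiL' Wh a = PiL k H Wh.toWeakBialgebra a := Wh.S_left a

/-- `β(Δ(m)) = Π^L(m₁) ⊗ m₂`. -/
lemma betaMap_comul (m : H) :
    betaMap Wh (Wh.comul m) = rTensor H (PiL' Wh) (Wh.comul m) := by
  set Λ : (H ⊗[k] H) ⊗[k] H →ₗ[k] H ⊗[k] H :=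
    rTensor H (LinearMap.mul' k H ∘ₗ TensorProduct.map LinearMap.id Wh.S) with hΛ
  have b1 : ∀ t : H ⊗[k] H,
      betaMap Wh t = Λ ((TensorProduct.assoc k H H H).symm (lTensor H Wh.comul t)) := by
    have sub : ∀ (a : H) (s : H ⊗[k] H),
        (a ⊗ₜ[k] (1 : H)) * rTensor H Wh.S s =
          Λ ((TensorProduct.assoc k H H H).symm (a ⊗ₜ[k] s)) := by
      intro a s
      induction s using TensorProduct.induction_on with
      | zero => simp
      | tmul c d => simp [hΛ, Algebra.TensorProduct.tmul_mul_tmul]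
      | add s t hs ht => simp only [TensorProduct.tmul_add, map_add, mul_add, hs, ht]
    intro t
    induction t using TensorProduct.induction_on with
    | zero => simp
    | tmul a b => rw [betaMap_tmul, lTensor_tmul, sub]
    | add s t hs ht => simp only [map_add, hs, ht]
  have b2 : ∀ t : H ⊗[k] H, Λ (rTensor H Wh.comul t) = rTensor H (PiL' Wh) t := by
    intro t
    induction t using TensorProduct.induction_on with
    | zero => simp
    | tmul a b => rw [rTensor_tmul, rTensor_tmul, rTensor_tmul]; rfl
    | add s t hs ht => simp only [map_add, hs, ht]
  rw [b1, ← Wh.coassoc m, LinearEquiv.symm_apply_apply, b2]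

/-- Identity B: `Π^L(m₁) m₂ = m`. -/
lemma piL_id (m : H) :
    LinearMap.mul' k H (rTensor H (PiL' Wh) (Wh.comul m)) = m := by
  have subB0 : ∀ a : H, PiL k H Wh.toWeakBialgebra a =
      (TensorProduct.lid k H) (rTensor H Wh.counit (Wh.comul 1 * (a ⊗ₜ[k] (1 : H)))) := by
    intro a
    rw [PiL]
    have : ∀ v : H ⊗[k] H,
        (TensorProduct.lid k H)
            ((TensorProduct.map (Wh.counit ∘ₗ mulRight k a) LinearMap.id) v) =
          (TensorProduct.lid k H) (rTensor H Wh.counit (v * (a ⊗ₜ[k] (1 : H)))) := by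
      intro v
      induction v using TensorProduct.induction_on with
      | zero => simp
      | tmul c d => simp [Algebra.TensorProduct.tmul_mul_tmul]
      | add s t hs ht => simp only [map_add, add_mul, hs, ht]
    exact this (Wh.comul 1)
  have subB1 : ∀ (a b : H) (v : H ⊗[k] H),
      (TensorProduct.lid k H) (rTensor H Wh.counit (v * (a ⊗ₜ[k] (1 : H)))) * b =
        (TensorProduct.lid k H) (rTensor H Wh.counit (v * (a ⊗ₜ[k] b))) := by
    intro a b v
    induction v using TensorProduct.induction_on with
    | zero => simp
    | tmul c d =>
      simp [Algebra.TensorProduct.tmul_mul_tmul, smul_mul_assoc]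
    | add s t hs ht => simp only [map_add, add_mul, hs, ht]
  have B1 : ∀ t : H ⊗[k] H,
      LinearMap.mul' k H (rTensor H (PiL' Wh) t) =
        (TensorProduct.lid k H) (rTensor H Wh.counit (Wh.comul 1 * t)) := by
    intro t
    induction t using TensorProduct.induction_on with
    | zero => simp
    | tmul a b =>
      rw [rTensor_tmul, mul'_apply, PiL'_apply, subB0, subB1]
    | add s t hs ht => simp only [map_add, mul_add, hs, ht]
  rw [B1, u_mul_comul, Wh.counit_comul]

/-- The balancing-relation membership lemma. -/
lemma mem_balHL (h : H) (t : H ⊗[k] H) :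
    ((h ⊗ₜ[k] (1 : H)) * rTensor H (PiL' Wh) t)
      - (h ⊗ₜ[k] (LinearMap.mul' k H (rTensor H (PiL' Wh) t))) ∈ balHL k H Wh := by
  induction t using TensorProduct.induction_on with
  | zero => simp [zero_mem]
  | tmul a b =>
    apply Submodule.subset_span
    refine ⟨h, b, PiL' Wh a, ⟨a, (PiL'_apply Wh a).symm⟩, ?_⟩
    rw [rTensor_tmul, mul'_apply, Algebra.TensorProduct.tmul_mul_tmul, one_mul]
  | add s t hs ht =>
    rw [map_add, mul_add, map_add, TensorProduct.tmul_add, add_sub_add_comm]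
    exact add_mem hs ht

/-- Every `z` is congruent to `β(can(z))` modulo the balancing relations. -/
lemma sub_betaMap_canMap_mem (z : H ⊗[k] H) :
    z - betaMap Wh (canMap k H Wh z) ∈ balHL k H Wh := by
  induction z using TensorProduct.induction_on with
  | zero => simp [zero_mem]
  | tmul h h' =>
    have hM := mem_balHL Wh h (Wh.comul h')
    rw [piL_id] at hM
    have hneg := neg_mem hM
    rw [neg_sub] at hneg
    rw [canMap_tmul, betaMap_leftmul, betaMap_comul]
    exact hneg
  | add s t hs ht =>
    rw [map_add, map_add, add_sub_add_comm]
    exact add_mem hs ht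

end AuxLemmas4

section AuxLemmas5

variable {k H : Type} [CommRing k] [Ring H] [Algebra k H] (Wh : WeakHopfAlgebra k H)

noncomputable def GammaMap (h : H) : H ⊗[k] (H ⊗[k] H) →ₗ[k] H ⊗[k] H :=
  LinearMap.mul' k (H ⊗[k] H) ∘ₗ TensorProduct.map ((TensorProduct.mk k H H).flip 1)
    (rTensor H Wh.S ∘ₗ mulLeft k (Wh.comul h))

lemma GammaMap_tmul (h a : H) (s : H ⊗[k] H) :
    GammaMap Wh h (a ⊗ₜ[k] s) =
      (a ⊗ₜ[k] (1 : H)) * rTensor H Wh.S (Wh.comul h * s) := by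
  simp [GammaMap]

lemma betaMap_one_tmul_mul (h : H) (v : H ⊗[k] H) :
    betaMap Wh (((1 : H) ⊗ₜ[k] h) * v) = GammaMap Wh h (lTensor H Wh.comul v) := by
  induction v using TensorProduct.induction_on with
  | zero => simp
  | tmul p q =>
    rw [Algebra.TensorProduct.tmul_mul_tmul, one_mul, betaMap_tmul, Wh.comul_mul,
      lTensor_tmul, GammaMap_tmul]
  | add s t hs ht => simp only [map_add, mul_add, hs, ht]

end AuxLemmas5


/-- for a weak Hopf algebra `H` (a right comodule algebra over
itself via `Δ`), the canonical map `can : H ⊗_{H^L} H → C = Im(g)`,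
`can(h⊗k) = h k₍₁₎ ⊗ k₍₂₎`, is well defined and bijective, with inverse
determined by `can⁻¹(1₍₁₎ ⊗ h1₍₂₎) = 1₍₁₎S(h₍₁₎1₍₂₎) ⊗_{H^L} h₍₂₎1₍₃₎`.
Hence `H` is a weak `H`-Galois extension of `H^L`.  (Bijectivity of the
induced map on `H ⊗_{H^L} H` is expressed via the balancing submodule, and
the inverse formula via Sweedler representations of `Δ²(1)` and `Δ(h)`.) -/
theorem weak_hopf_self_galois :
    -- `can` descends to `H ⊗_{H^L} H`
    (∀ z ∈ balHL k H Wh, canMap k H Wh z = 0) ∧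
    -- the induced map is injective
    (∀ z : H ⊗[k] H, canMap k H Wh z = 0 → z ∈ balHL k H Wh) ∧
    -- `can` lands in `C = Im(g)` and is surjective onto it
    (∀ z : H ⊗[k] H,
      canMap k H Wh z ∈ LinearMap.range (mulRight k (Wh.comul 1))) ∧
    (∀ c ∈ LinearMap.range (mulRight k (Wh.comul 1)),
      ∃ z : H ⊗[k] H, canMap k H Wh z = c) ∧
    -- the inverse formula: `can(1₍₁₎S(h₍₁₎1₍₂₎) ⊗ h₍₂₎1₍₃₎) = 1₍₁₎ ⊗ h1₍₂₎`
    (∀ (h : H) (ι κ : Type) (sι : Finset ι) (sκ : Finset κ)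
      (e1 e2 e3 : ι → H) (h1 h2 : κ → H),
      (rTensor H Wh.comul) (Wh.comul 1) =
        ∑ i ∈ sι, (e1 i ⊗ₜ[k] e2 i) ⊗ₜ[k] e3 i →
      Wh.comul h = ∑ j ∈ sκ, h1 j ⊗ₜ[k] h2 j →
      canMap k H Wh (∑ i ∈ sι, ∑ j ∈ sκ,
          (e1 i * Wh.S (h1 j * e2 i)) ⊗ₜ[k] (h2 j * e3 i)) =
        ((1 : H) ⊗ₜ[k] h) * Wh.comul 1) := by
  refine ⟨?_, ?_, ?_, ?_, ?_⟩
  · -- can descends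
    intro z hz
    induction hz using Submodule.span_induction with
    | mem z hzmem =>
      obtain ⟨h, h', w, ⟨x, rfl⟩, rfl⟩ := hzmem
      have e1 : Wh.comul (PiL k H Wh.toWeakBialgebra x * h') =
          (PiL k H Wh.toWeakBialgebra x ⊗ₜ[k] (1 : H)) * Wh.comul h' := by
        rw [Wh.comul_mul, comul_PiL, mul_assoc, u_mul_comul]
      rw [map_sub, canMap_tmul, canMap_tmul, e1, ← mul_assoc,
        Algebra.TensorProduct.tmul_mul_tmul, mul_one, sub_self]
    | zero => simp
    | add x y hx hy h1 h2 => rw [map_add, h1, h2, add_zero]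
    | smul a x hx h1 => rw [map_smul, h1, smul_zero]
  · -- injectivity
    intro z hz
    have hmem := sub_betaMap_canMap_mem Wh z
    rw [hz, map_zero, sub_zero] at hmem
    exact hmem
  · -- lands in C
    intro z
    refine ⟨canMap k H Wh z, ?_⟩
    rw [mulRight_apply]
    induction z using TensorProduct.induction_on with
    | zero => simp
    | tmul a b => rw [canMap_tmul, mul_assoc, comul_mul_u]
    | add s t hs ht => rw [map_add, add_mul, hs, ht]
  · -- surjectivity onto C
    rintro c ⟨y, rfl⟩
    exact ⟨betaMap Wh y, by rw [canMap_betaMap, mulRight_apply]⟩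
  · -- inverse formula
    intro h ι κ sι sκ e1 e2 e3 h1 h2 hrep hΔ
    have hu : lTensor H Wh.comul (Wh.comul 1) =
        ∑ i ∈ sι, e1 i ⊗ₜ[k] (e2 i ⊗ₜ[k] e3 i) := by
      rw [← Wh.coassoc 1, hrep, map_sum]
      simp only [TensorProduct.assoc_tmul]
    have key : (∑ i ∈ sι, ∑ j ∈ sκ,
        (e1 i * Wh.S (h1 j * e2 i)) ⊗ₜ[k] (h2 j * e3 i)) =
        betaMap Wh (((1 : H) ⊗ₜ[k] h) * Wh.comul 1) := by
      rw [betaMap_one_tmul_mul, hu, map_sum]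
      refine Finset.sum_congr rfl fun i _ => ?_
      rw [GammaMap_tmul, hΔ, Finset.sum_mul, map_sum, Finset.mul_sum]
      refine Finset.sum_congr rfl fun j _ => ?_
      rw [Algebra.TensorProduct.tmul_mul_tmul, rTensor_tmul,
        Algebra.TensorProduct.tmul_mul_tmul, one_mul]
    rw [key, canMap_betaMap, mul_assoc, u_mul_comul]
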